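/- Let 𝕊 ⊆ ℝ^ℓ (ℓ ≥ 2) be a state space such that for every n and every nonempty bounded set X ⊆ ℝⁿ whose affine span has dimension at most ℓ − 1, ddi(X | 𝕊) is a singleton. Then for every such X and every orthogonal linear map U : ℝⁿ → ℝⁿ with U(X) = X, the unique element Y of ddi(X | 𝕊) satisfies U(Y) = Y. -/

import Mathlib

open MeasureTheory Metric Set

noncomputable section

/-- `Euc n` is the Euclidean space `ℝⁿ`. -/
abbrev Euc (n : ℕ) : Type := EuclideanSpace ℝ (Fin n)

/-- A state space of linear dimension `ℓ`: a compact convex set contained in (and affinely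
spanning) an affine hyperplane not through the origin, here written as `{x | f x = 1}`
for a nonzero linear functional `f`. -/
def IsStateSpace {ℓ : ℕ} (𝕊 : Set (Euc ℓ)) : Prop :=
  IsCompact 𝕊 ∧ Convex ℝ 𝕊 ∧
    ∃ f : Euc ℓ →ₗ[ℝ] ℝ, f ≠ 0 ∧
      (affineSpan ℝ 𝕊 : Set (Euc ℓ)) = {x | f x = 1}

/-- `R` is admissible for the data set `X` (w.r.t. the state space `𝕊`): it is the image of `𝕊`
under some linear map and satisfies `X ⊆ R ⊆ aff X`. -/
def Admissible {ℓ n : ℕ} (𝕊 : Set (Euc ℓ)) (X R : Set (Euc n)) : Prop :=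
  (∃ M : Euc ℓ →ₗ[ℝ] Euc n, R = M '' 𝕊) ∧ X ⊆ R ∧ R ⊆ (affineSpan ℝ X : Set (Euc n))

/-- Data-driven inference: the admissible sets for `X` of minimal `d`-dimensional Hausdorff
measure, where `d = dim aff X`. -/
def ddi {ℓ n : ℕ} (X : Set (Euc n)) (𝕊 : Set (Euc ℓ)) : Set (Set (Euc n)) :=
  {R | Admissible 𝕊 X R ∧ ∀ R' : Set (Euc n), Admissible 𝕊 X R' →
      μH[(Module.finrank ℝ (affineSpan ℝ X).direction : ℝ)] R ≤
        μH[(Module.finrank ℝ (affineSpan ℝ X).direction : ℝ)] R'}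

/-- A (hyper)-ellipsoid state space in `ℝ^ℓ`: the image of the closed unit ball of `ℝ^(ℓ-1)`
under an injective affine map. -/
def IsHyperEllipsoid {ℓ : ℕ} (𝕊 : Set (Euc ℓ)) : Prop :=
  ∃ F : Euc (ℓ - 1) →ᵃ[ℝ] Euc ℓ, Function.Injective F ∧ 𝕊 = F '' closedBall 0 1

theorem stmt_1 {ℓ : ℕ} (hℓ : 2 ≤ ℓ) (𝕊 : Set (Euc ℓ)) (hS : IsStateSpace 𝕊)
    (hsing : ∀ (n : ℕ) (X : Set (Euc n)), X.Nonempty → Bornology.IsBounded X →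
      Module.finrank ℝ (affineSpan ℝ X).direction ≤ ℓ - 1 →
      ∃ Y : Set (Euc n), ddi X 𝕊 = {Y}) :
    ∀ (n : ℕ) (X : Set (Euc n)), X.Nonempty → Bornology.IsBounded X →
      Module.finrank ℝ (affineSpan ℝ X).direction ≤ ℓ - 1 →
      ∀ U : Euc n ≃ₗᵢ[ℝ] Euc n, U '' X = X →
      ∀ Y : Set (Euc n), ddi X 𝕊 = {Y} → U '' Y = Y := by
  intro n X hne hbd hdim U hUX Y hY
  have hYmem : Y ∈ ddi X 𝕊 := by rw [hY]; exact rfl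
  obtain ⟨⟨⟨M, hM⟩, hXY, hYaff⟩, hmin⟩ := hYmem
  have hUfun : ⇑(U.toLinearEquiv.toLinearMap.toAffineMap) = ⇑U := rfl
  have hspan : U '' (affineSpan ℝ X : Set (Euc n)) = (affineSpan ℝ X : Set (Euc n)) := by
    have h := AffineSubspace.map_span (U.toLinearEquiv.toLinearMap.toAffineMap) X
    rw [hUfun, hUX] at h
    calc U '' (affineSpan ℝ X : Set (Euc n))
        = ((affineSpan ℝ X).map (U.toLinearEquiv.toLinearMap.toAffineMap) : Set (Euc n)) := by
          rw [AffineSubspace.coe_map, hUfun]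
      _ = (affineSpan ℝ X : Set (Euc n)) := by rw [h]
  have hadm : Admissible 𝕊 X (U '' Y) := by
    refine ⟨⟨U.toLinearEquiv.toLinearMap ∘ₗ M, ?_⟩, ?_, ?_⟩
    · rw [hM, ← Set.image_comp]; rfl
    · rw [← hUX]; exact Set.image_mono hXY
    · rw [← hspan]; exact Set.image_mono hYaff
  have hmeas : ∀ d : ℝ, 0 ≤ d → μH[d] (U '' Y) = μH[d] Y := fun d hd =>
    U.isometry.hausdorffMeasure_image (Or.inl hd) Y
  have hmem : U '' Y ∈ ddi X 𝕊 := by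
    refine ⟨hadm, fun R' hR' => ?_⟩
    rw [hmeas _ (Nat.cast_nonneg _)]
    exact hmin R' hR'
  rw [hY] at hmem
  exact hmem
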